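/- arXiv:1501.04826 — 6 statements merged into one kernel-verified Lean document; each statement's English description precedes it below -/
import Mathlib

section
/- Let γ be a confidence parameter with 0 < γ < 1 and let X₀ → Y₀ and X₁ → Y₁ be two partial implications over the attribute set [n]. Then the following are equivalent: (1) X₁ → Y₁ ⊨_γ X₀ → Y₀; (2) either Y₀ ⊆ X₀, or both X₁ ⊆ X₀ and X₀Y₀ ⊆ X₁Y₁. -/
open Finset

/-- Number of transactions in the dataset `D` that cover `X`, counted with multiplicity. -/
def cntD {n : ℕ} (D : Multiset (Finset (Fin n))) (X : Finset (Fin n)) : ℕ :=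
  (D.filter (fun Z => X ⊆ Z)).card

/-- `D ⊨_γ X → Y` : either no transaction covers `X`, or the confidence of `X → Y` is ≥ γ. -/
def satPI {n : ℕ} (γ : ℝ) (D : Multiset (Finset (Fin n))) (X Y : Finset (Fin n)) : Prop :=
  cntD D X = 0 ∨ γ * (cntD D X : ℝ) ≤ (cntD D (X ∪ Y) : ℝ)

/-- Entailment at confidence threshold γ from the premises indexed by `L`. -/
def entailsFrom {n k : ℕ} (γ : ℝ) (P : Fin k → Finset (Fin n) × Finset (Fin n))
    (L : Finset (Fin k)) (X₀ Y₀ : Finset (Fin n)) : Prop :=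
  ∀ D : Multiset (Finset (Fin n)),
    (∀ i ∈ L, satPI γ D (P i).1 (P i).2) → satPI γ D X₀ Y₀

/-- Proper entailment from the premises indexed by `L`: the entailment holds,
and it fails from every proper subset of the premises. -/
def properFrom {n k : ℕ} (γ : ℝ) (P : Fin k → Finset (Fin n) × Finset (Fin n))
    (L : Finset (Fin k)) (X₀ Y₀ : Finset (Fin n)) : Prop :=
  entailsFrom γ P L X₀ Y₀ ∧ ∀ L' ⊂ L, ¬ entailsFrom γ P L' X₀ Y₀

/-- The weight `w_Z(X → Y)`: `1-γ` if `Z` witnesses, `-γ` if `Z` violates, `0` otherwise. -/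
noncomputable def wt {n : ℕ} (γ : ℝ) (Z X Y : Finset (Fin n)) : ℝ :=
  if X ∪ Y ⊆ Z then 1 - γ else if X ⊆ Z then -γ else 0

/-- The premises indexed by `L` enforce homogeneity. -/
def homogFrom {n k : ℕ} (P : Fin k → Finset (Fin n) × Finset (Fin n))
    (L : Finset (Fin k)) : Prop :=
  ∀ Z : Finset (Fin n),
    (∀ i ∈ L, ¬ (P i).1 ⊆ Z ∨ (P i).1 ∪ (P i).2 ⊆ Z) →
    ((∀ i ∈ L, ¬ (P i).1 ⊆ Z) ∨ (∀ i ∈ L, (P i).1 ∪ (P i).2 ⊆ Z))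

/-- The critical threshold `γ*({Xᵢ → Yᵢ : i ∈ L}, X)`. -/
noncomputable def gammaStar {n k : ℕ} (P : Fin k → Finset (Fin n) × Finset (Fin n))
    (L : Finset (Fin k)) (X : Finset (Fin n)) : ℝ :=
  sInf { r : ℝ | ∃ lam : Fin k → ℝ, (∀ i ∈ L, 0 ≤ lam i) ∧ (∑ i ∈ L, lam i) = 1 ∧
    r = (Finset.univ.filter (fun Z : Finset (Fin n) => ¬ X ⊆ Z)).fold max 0
          (fun Z => (∑ i ∈ L.filter (fun i => (P i).1 ∪ (P i).2 ⊆ Z), lam i) /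
                    (∑ i ∈ L.filter (fun i => (P i).1 ⊆ Z), lam i)) }


lemma cntD_add {n : ℕ} (D₁ D₂ : Multiset (Finset (Fin n))) (X : Finset (Fin n)) :
    cntD (D₁ + D₂) X = cntD D₁ X + cntD D₂ X := by
  simp [cntD, Multiset.filter_add]

lemma cntD_replicate {n : ℕ} (a : ℕ) (S X : Finset (Fin n)) :
    cntD (Multiset.replicate a S) X = if X ⊆ S then a else 0 := by
  induction a with
  | zero => simp [cntD]
  | succ a ih =>
      rw [Multiset.replicate_succ]
      simp only [cntD, Multiset.filter_cons, Multiset.card_add] at *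
      split <;> simp_all [Nat.add_comm]

lemma cntD_single {n : ℕ} (T X : Finset (Fin n)) :
    cntD {T} X = if X ⊆ T then 1 else 0 := by
  simp [cntD, Multiset.filter_singleton]
  split <;> simp

lemma cntD_mono {n : ℕ} (D : Multiset (Finset (Fin n))) {X X' : Finset (Fin n)}
    (h : X ⊆ X') : cntD D X' ≤ cntD D X := by
  apply Multiset.card_le_card
  apply Multiset.monotone_filter_right
  intro Z hZ
  exact h.trans hZ

theorem stmt1 {n : ℕ} (γ : ℝ) (hγ0 : 0 < γ) (hγ1 : γ < 1)
    (X₀ Y₀ X₁ Y₁ : Finset (Fin n)) :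
    (∀ D : Multiset (Finset (Fin n)), satPI γ D X₁ Y₁ → satPI γ D X₀ Y₀) ↔
      (Y₀ ⊆ X₀ ∨ (X₁ ⊆ X₀ ∧ X₀ ∪ Y₀ ⊆ X₁ ∪ Y₁)) := by
  have hU0 : ¬ X₀ ∪ Y₀ ⊆ X₀ ∨ Y₀ ⊆ X₀ := by
    by_cases hY : Y₀ ⊆ X₀
    · exact Or.inr hY
    · exact Or.inl (fun hh => hY (fun x hx => hh (Finset.mem_union_right _ hx)))
  constructor
  · intro h
    by_contra hc
    push_neg at hc
    obtain ⟨hY0, h2⟩ := hc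
    have hU0' : ¬ X₀ ∪ Y₀ ⊆ X₀ := hU0.resolve_right hY0
    by_cases hX1 : X₁ ⊆ X₀
    · -- counterexample: a copies of X₁ ∪ Y₁ plus one copy of X₀
      have hnot : ¬ X₀ ∪ Y₀ ⊆ X₁ ∪ Y₁ := h2 hX1
      set a : ℕ := ⌈γ / (1 - γ)⌉₊ with ha
      set D : Multiset (Finset (Fin n)) := Multiset.replicate a (X₁ ∪ Y₁) + {X₀} with hD
      have hc1 : cntD D X₁ = a + 1 := by
        rw [hD, cntD_add, cntD_replicate, cntD_single,
          if_pos Finset.subset_union_left, if_pos hX1]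
      have hcU1 : a ≤ cntD D (X₁ ∪ Y₁) := by
        rw [hD, cntD_add, cntD_replicate, if_pos (subset_refl _)]
        exact Nat.le_add_right _ _
      have hc0 : 1 ≤ cntD D X₀ := by
        rw [hD, cntD_add, cntD_single, if_pos (subset_refl _)]
        omega
      have hcU0 : cntD D (X₀ ∪ Y₀) = 0 := by
        rw [hD, cntD_add, cntD_replicate, cntD_single, if_neg hnot, if_neg hU0']
      have hprem : satPI γ D X₁ Y₁ := by
        right
        have hga : γ / (1 - γ) ≤ (a : ℝ) := Nat.le_ceil _
        have h1γ : (0:ℝ) < 1 - γ := by linarith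
        have : γ ≤ (1 - γ) * a := by
          rw [div_le_iff₀ h1γ] at hga; linarith
        have haU : (a : ℝ) ≤ (cntD D (X₁ ∪ Y₁) : ℝ) := by exact_mod_cast hcU1
        rw [hc1]
        push_cast
        nlinarith
      have := h D hprem
      rcases this with h0 | h0
      · omega
      · rw [hcU0] at h0
        have : (1:ℝ) ≤ (cntD D X₀ : ℝ) := by exact_mod_cast hc0
        push_cast at h0
        nlinarith
    · -- counterexample: single copy of X₀
      have hprem : satPI γ ({X₀} : Multiset (Finset (Fin n))) X₁ Y₁ := by
        left
        rw [cntD_single, if_neg hX1]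
      have := h _ hprem
      rcases this with h0 | h0
      · rw [cntD_single, if_pos (subset_refl _)] at h0
        omega
      · rw [cntD_single, cntD_single, if_pos (subset_refl _), if_neg hU0'] at h0
        push_cast at h0
        linarith
  · rintro (hY | ⟨h1, h2⟩) D hsat
    · right
      have he : X₀ ∪ Y₀ = X₀ := Finset.union_eq_left.mpr hY
      rw [he]
      have : (0:ℝ) ≤ (cntD D X₀ : ℝ) := Nat.cast_nonneg _
      nlinarith
    · rcases hsat with h0 | h0
      · left
        have := cntD_mono D h1
        omega
      · right
        have m1 : (cntD D X₀ : ℝ) ≤ (cntD D X₁ : ℝ) := by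
          exact_mod_cast cntD_mono D h1
        have m2 : (cntD D (X₁ ∪ Y₁) : ℝ) ≤ (cntD D (X₀ ∪ Y₀) : ℝ) := by
          exact_mod_cast cntD_mono D h2
        nlinarith
end

section
/- Let γ be a confidence parameter with 1/2 ≤ γ < 1 and let X₀ → Y₀, X₁ → Y₁ and X₂ → Y₂ be three partial implications over the attribute set [n]. Then the following are equivalent: (1) X₁ → Y₁, X₂ → Y₂ ⊨_γ X₀ → Y₀; (2) either Y₀ ⊆ X₀, or for some i ∈ {1,2} both X_i ⊆ X₀ and X₀Y₀ ⊆ X_iY_i, or all seven inclusions hold simultaneously: X₁ ⊆ X₂Y₂, X₂ ⊆ X₁Y₁, X₁ ⊆ X₀, X₂ ⊆ X₀, X₀ ⊆ X₁X₂Y₁Y₂, Y₀ ⊆ X₀Y₁, and Y₀ ⊆ X₀Y₂. -/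
open Finset

namespace Stmt2Aux
variable {n : ℕ}

lemma cntD_mono (D : Multiset (Finset (Fin n))) {X X' : Finset (Fin n)} (h : X ⊆ X') :
    cntD D X' ≤ cntD D X := by
  apply Multiset.card_le_card
  apply Multiset.monotone_filter_right
  intro Z hZ
  exact h.trans hZ

lemma cntD_add (D₁ D₂ : Multiset (Finset (Fin n))) (X : Finset (Fin n)) :
    cntD (D₁ + D₂) X = cntD D₁ X + cntD D₂ X := by
  simp [cntD, Multiset.filter_add]

lemma cntD_replicate (a : ℕ) (A X : Finset (Fin n)) :
    cntD (Multiset.replicate a A) X = if X ⊆ A then a else 0 := by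
  by_cases h : X ⊆ A
  · rw [if_pos h]
    unfold cntD
    rw [Multiset.filter_eq_self.2 (fun b hb => by
      rw [Multiset.eq_of_mem_replicate hb]; exact h)]
    simp
  · rw [if_neg h]
    unfold cntD
    rw [Multiset.filter_eq_nil.2 (fun b hb => by
      rw [Multiset.eq_of_mem_replicate hb]; exact h)]
    simp

lemma cnt3 (a b c : ℕ) (A B C X : Finset (Fin n)) :
    cntD (Multiset.replicate a A + Multiset.replicate b B + Multiset.replicate c C) X
    = (if X ⊆ A then a else 0) + (if X ⊆ B then b else 0) + (if X ⊆ C then c else 0) := by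
  rw [cntD_add, cntD_add, cntD_replicate, cntD_replicate, cntD_replicate]

lemma satPI_of_bounds {γ : ℝ} (hγ0 : 0 ≤ γ) {D : Multiset (Finset (Fin n))} {X Y : Finset (Fin n)}
    {k m : ℕ} (hnum : k ≤ cntD D (X ∪ Y)) (hden : cntD D X ≤ m) (h : γ * m ≤ k) :
    satPI γ D X Y := by
  right
  have h1 : γ * (cntD D X : ℝ) ≤ γ * m :=
    mul_le_mul_of_nonneg_left (by exact_mod_cast hden) hγ0
  have h2 : (k : ℝ) ≤ cntD D (X ∪ Y) := by exact_mod_cast hnum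
  linarith

lemma not_satPI_of_bounds {γ : ℝ} (hγ0 : 0 ≤ γ) {D : Multiset (Finset (Fin n))}
    {X Y : Finset (Fin n)} {k m : ℕ}
    (hden : m ≤ cntD D X) (hnum : cntD D (X ∪ Y) ≤ k) (h : (k : ℝ) < γ * m) :
    ¬ satPI γ D X Y := by
  have hm : m ≠ 0 := by
    rintro rfl
    simp only [Nat.cast_zero, mul_zero] at h
    exact absurd h (not_lt.2 (by positivity))
  rintro (h0 | hle)
  · omega
  · have h1 : γ * (m : ℝ) ≤ γ * cntD D X :=
      mul_le_mul_of_nonneg_left (by exact_mod_cast hden) hγ0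
    have h2 : (cntD D (X ∪ Y) : ℝ) ≤ k := by exact_mod_cast hnum
    linarith

/-- Entailment from the two premises. -/
def Ent (γ : ℝ) (X₀ Y₀ X₁ Y₁ X₂ Y₂ : Finset (Fin n)) : Prop :=
  ∀ D : Multiset (Finset (Fin n)), satPI γ D X₁ Y₁ → satPI γ D X₂ Y₂ → satPI γ D X₀ Y₀

lemma nsub_union_left {X₀ Y₀ X : Finset (Fin n)} (h : ¬ X₀ ⊆ X) : ¬ X₀ ∪ Y₀ ⊆ X :=
  fun hh => h (subset_union_left.trans hh)

lemma nsub_union_right {X₀ Y₀ : Finset (Fin n)} (h : ¬ Y₀ ⊆ X₀) : ¬ X₀ ∪ Y₀ ⊆ X₀ :=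
  fun hh => h (subset_union_right.trans hh)

/-- Single–transaction counterexample `{X₀}` when neither premise body is contained in `X₀`. -/
lemma F1 {γ : ℝ} (hγ : 0 < γ) {X₀ Y₀ X₁ Y₁ X₂ Y₂ : Finset (Fin n)}
    (h1 : ¬ X₁ ⊆ X₀) (h2 : ¬ X₂ ⊆ X₀) (h0 : ¬ Y₀ ⊆ X₀)
    (hE : Ent γ X₀ Y₀ X₁ Y₁ X₂ Y₂) : False := by
  set D := Multiset.replicate 1 X₀ + Multiset.replicate 0 X₀ + Multiset.replicate 0 X₀ with hD
  have s1 : satPI γ D X₁ Y₁ := by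
    left; rw [hD, cnt3, if_neg h1]; simp
  have s2 : satPI γ D X₂ Y₂ := by
    left; rw [hD, cnt3, if_neg h2]; simp
  refine not_satPI_of_bounds (le_of_lt hγ) (k := 0) (m := 1) ?_ ?_ (by simpa using hγ) (hE D s1 s2)
  · rw [hD, cnt3, if_pos (Finset.Subset.refl _)]; omega
  · rw [hD, cnt3, if_neg (nsub_union_right h0)]; simp

/-- `{X₀} + b·{T}` where `T` contains both premise closures but not `X₀`. -/
lemma G1 {γ : ℝ} (hγ : 0 < γ) {X₀ Y₀ X₁ Y₁ X₂ Y₂ T : Finset (Fin n)} {b : ℕ}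
    (hb : γ * (1 + b) ≤ b)
    (h0 : ¬ Y₀ ⊆ X₀) (hT : ¬ X₀ ⊆ T) (h1T : X₁ ∪ Y₁ ⊆ T) (h2T : X₂ ∪ Y₂ ⊆ T)
    (hE : Ent γ X₀ Y₀ X₁ Y₁ X₂ Y₂) : False := by
  set D := Multiset.replicate 1 X₀ + Multiset.replicate b T + Multiset.replicate 0 T with hD
  have key : ∀ X Y : Finset (Fin n), X ∪ Y ⊆ T → satPI γ D X Y := by
    intro X Y hXY
    refine satPI_of_bounds (le_of_lt hγ) (k := b) (m := 1 + b) ?_ ?_ (by push_cast; linarith)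
    · rw [hD, cnt3, if_pos hXY]; split_ifs <;> omega
    · rw [hD, cnt3]; split_ifs <;> omega
  refine not_satPI_of_bounds (le_of_lt hγ) (k := 0) (m := 1) ?_ ?_ (by simpa using hγ)
    (hE D (key _ _ h1T) (key _ _ h2T))
  · rw [hD, cnt3, if_pos (Finset.Subset.refl _)]; omega
  · rw [hD, cnt3, if_neg (nsub_union_right h0), if_neg (nsub_union_left hT),
      if_neg (nsub_union_left hT)]

/-- `p·{X₀} + q·{X₁Y₁} + s·{X₁Y₁∪X₂Y₂}`. -/
lemma S1 {γ : ℝ} (hγ : 0 < γ) {X₀ Y₀ X₁ Y₁ X₂ Y₂ : Finset (Fin n)} {p q s : ℕ}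
    (hp1 : (s : ℝ) < γ * (p + s)) (hp2 : γ * (p + q + s) ≤ q + s) (hq : γ * (q + s) ≤ s)
    (h0 : ¬ Y₀ ⊆ X₀) (hc : ¬ X₂ ⊆ X₀) (h5 : X₀ ⊆ X₁ ∪ Y₁ ∪ (X₂ ∪ Y₂))
    (hN1 : ¬ X₀ ∪ Y₀ ⊆ X₁ ∪ Y₁)
    (hE : Ent γ X₀ Y₀ X₁ Y₁ X₂ Y₂) : False := by
  set D := Multiset.replicate p X₀ + Multiset.replicate q (X₁ ∪ Y₁)
      + Multiset.replicate s (X₁ ∪ Y₁ ∪ (X₂ ∪ Y₂)) with hD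
  have s1 : satPI γ D X₁ Y₁ := by
    refine satPI_of_bounds (le_of_lt hγ) (k := q + s) (m := p + q + s) ?_ ?_ (by push_cast; linarith)
    · rw [hD, cnt3, if_pos (Finset.Subset.refl _), if_pos Finset.subset_union_left]
      split_ifs <;> omega
    · rw [hD, cnt3]; split_ifs <;> omega
  have s2 : satPI γ D X₂ Y₂ := by
    refine satPI_of_bounds (le_of_lt hγ) (k := s) (m := q + s) ?_ ?_ (by push_cast; linarith)
    · rw [hD, cnt3, if_pos Finset.subset_union_right]; split_ifs <;> omega
    · rw [hD, cnt3, if_neg hc]; split_ifs <;> omega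
  refine not_satPI_of_bounds (le_of_lt hγ) (k := s) (m := p + s) ?_ ?_ (by push_cast; linarith)
    (hE D s1 s2)
  · rw [hD, cnt3, if_pos (Finset.Subset.refl _), if_pos h5]; split_ifs <;> omega
  · rw [hD, cnt3, if_neg (nsub_union_right h0), if_neg hN1]; split_ifs <;> omega

/-- `{Z} + {X₂Y₂} + r·{Z∪X₂Y₂}` where `Z ⊇ X₀ ∪ X₁Y₁` misses `Y₀`. -/
lemma S2 {γ : ℝ} (hγ : 0 < γ) {X₀ Y₀ X₁ Y₁ X₂ Y₂ Z : Finset (Fin n)} {r : ℕ}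
    (hr1 : γ * (2 + r) ≤ 1 + r) (hr2 : (r : ℝ) < γ * (1 + r))
    (hZ0 : X₀ ⊆ Z) (hZn : ¬ X₀ ∪ Y₀ ⊆ Z) (hZ1 : X₁ ∪ Y₁ ⊆ Z)
    (hN2 : ¬ X₀ ∪ Y₀ ⊆ X₂ ∪ Y₂)
    (hE : Ent γ X₀ Y₀ X₁ Y₁ X₂ Y₂) : False := by
  set D := Multiset.replicate 1 Z + Multiset.replicate 1 (X₂ ∪ Y₂)
      + Multiset.replicate r (Z ∪ (X₂ ∪ Y₂)) with hD
  have s1 : satPI γ D X₁ Y₁ := by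
    refine satPI_of_bounds (le_of_lt hγ) (k := 1 + r) (m := 2 + r) ?_ ?_ (by push_cast; linarith)
    · rw [hD, cnt3, if_pos hZ1, if_pos (hZ1.trans Finset.subset_union_left)]
      split_ifs <;> omega
    · rw [hD, cnt3]; split_ifs <;> omega
  have s2 : satPI γ D X₂ Y₂ := by
    refine satPI_of_bounds (le_of_lt hγ) (k := 1 + r) (m := 2 + r) ?_ ?_ (by push_cast; linarith)
    · rw [hD, cnt3, if_pos (Finset.Subset.refl _), if_pos Finset.subset_union_right]
      split_ifs <;> omega
    · rw [hD, cnt3]; split_ifs <;> omega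
  refine not_satPI_of_bounds (le_of_lt hγ) (k := r) (m := 1 + r) ?_ ?_ (by push_cast; linarith)
    (hE D s1 s2)
  · rw [hD, cnt3, if_pos hZ0, if_pos (hZ0.trans Finset.subset_union_left)]
    split_ifs <;> omega
  · rw [hD, cnt3, if_neg hZn, if_neg hN2]; split_ifs <;> omega

/-- `{X₀} + q·{X₁Y₁} + r·{X₂Y₂}` when `X₂ ⊄ X₁Y₁`. -/
lemma S3 {γ : ℝ} (hγ : 0 < γ) {X₀ Y₀ X₁ Y₁ X₂ Y₂ : Finset (Fin n)} {q r : ℕ}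
    (h1 : γ * (1 + q + r) ≤ q) (h2 : γ * (1 + r) ≤ r)
    (h0 : ¬ Y₀ ⊆ X₀) (hN1 : ¬ X₀ ∪ Y₀ ⊆ X₁ ∪ Y₁) (hN2 : ¬ X₀ ∪ Y₀ ⊆ X₂ ∪ Y₂)
    (hc : ¬ X₂ ⊆ X₁ ∪ Y₁)
    (hE : Ent γ X₀ Y₀ X₁ Y₁ X₂ Y₂) : False := by
  set D := Multiset.replicate 1 X₀ + Multiset.replicate q (X₁ ∪ Y₁)
      + Multiset.replicate r (X₂ ∪ Y₂) with hD
  have s1 : satPI γ D X₁ Y₁ := by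
    refine satPI_of_bounds (le_of_lt hγ) (k := q) (m := 1 + q + r) ?_ ?_ (by push_cast; linarith)
    · rw [hD, cnt3, if_pos (Finset.Subset.refl _)]; split_ifs <;> omega
    · rw [hD, cnt3]; split_ifs <;> omega
  have s2 : satPI γ D X₂ Y₂ := by
    refine satPI_of_bounds (le_of_lt hγ) (k := r) (m := 1 + r) ?_ ?_ (by push_cast; linarith)
    · rw [hD, cnt3, if_pos (Finset.Subset.refl _)]; split_ifs <;> omega
    · rw [hD, cnt3, if_neg hc]; split_ifs <;> omega
  refine not_satPI_of_bounds (le_of_lt hγ) (k := 0) (m := 1) ?_ ?_ (by simpa using hγ)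
    (hE D s1 s2)
  · rw [hD, cnt3, if_pos (Finset.Subset.refl _)]; omega
  · rw [hD, cnt3, if_neg (nsub_union_right h0), if_neg hN1, if_neg hN2]


variable {n : ℕ}


lemma cntD_cons (Z : Finset (Fin n)) (D : Multiset (Finset (Fin n))) (X : Finset (Fin n)) :
    cntD (Z ::ₘ D) X = (if X ⊆ Z then 1 else 0) + cntD D X := by
  simp only [cntD, Multiset.filter_cons]
  rw [Multiset.card_add]
  congr 1
  split_ifs <;> simp

lemma count_key {X₀ Y₀ X₁ Y₁ X₂ Y₂ : Finset (Fin n)}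
    (h1 : X₁ ⊆ X₂ ∪ Y₂) (h2 : X₂ ⊆ X₁ ∪ Y₁) (h3 : X₁ ⊆ X₀) (h4 : X₂ ⊆ X₀)
    (h5 : X₀ ⊆ X₁ ∪ X₂ ∪ Y₁ ∪ Y₂) (h6 : Y₀ ⊆ X₀ ∪ Y₁) (h7 : Y₀ ⊆ X₀ ∪ Y₂)
    (D : Multiset (Finset (Fin n))) :
    cntD D (X₁ ∪ Y₁) + cntD D (X₂ ∪ Y₂) + cntD D X₀ ≤
      2 * cntD D (X₀ ∪ Y₀) + cntD D (X₁ ∪ X₂) := by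
  induction D using Multiset.induction with
  | empty => simp [cntD]
  | cons Z D ih =>
    rw [cntD_cons, cntD_cons, cntD_cons, cntD_cons, cntD_cons]
    by_cases hA : X₁ ∪ Y₁ ⊆ Z <;> by_cases hB : X₂ ∪ Y₂ ⊆ Z <;> by_cases hC : X₀ ⊆ Z
    · have e1 : X₀ ∪ Y₀ ⊆ Z :=
        union_subset hC (h6.trans (union_subset hC (subset_union_right.trans hA)))
      have e2 : X₁ ∪ X₂ ⊆ Z :=
        union_subset (subset_union_left.trans hA) (subset_union_left.trans hB)
      rw [if_pos hA, if_pos hB, if_pos hC, if_pos e1, if_pos e2]; omega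
    · exact absurd (h5.trans (union_subset (union_subset (union_subset
        (subset_union_left.trans hA) (subset_union_left.trans hB))
        (subset_union_right.trans hA)) (subset_union_right.trans hB))) hC
    · have e1 : X₀ ∪ Y₀ ⊆ Z :=
        union_subset hC (h6.trans (union_subset hC (subset_union_right.trans hA)))
      have e2 : X₁ ∪ X₂ ⊆ Z := union_subset (subset_union_left.trans hA) (h2.trans hA)
      rw [if_pos hA, if_neg hB, if_pos hC, if_pos e1, if_pos e2]; omega
    · have e1 : ¬ X₀ ∪ Y₀ ⊆ Z := fun h => hC (subset_union_left.trans h)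
      have e2 : X₁ ∪ X₂ ⊆ Z := union_subset (subset_union_left.trans hA) (h2.trans hA)
      rw [if_pos hA, if_neg hB, if_neg hC, if_neg e1, if_pos e2]; omega
    · have e1 : X₀ ∪ Y₀ ⊆ Z :=
        union_subset hC (h7.trans (union_subset hC (subset_union_right.trans hB)))
      have e2 : X₁ ∪ X₂ ⊆ Z := union_subset (h1.trans hB) (subset_union_left.trans hB)
      rw [if_neg hA, if_pos hB, if_pos hC, if_pos e1, if_pos e2]; omega
    · have e1 : ¬ X₀ ∪ Y₀ ⊆ Z := fun h => hC (subset_union_left.trans h)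
      have e2 : X₁ ∪ X₂ ⊆ Z := union_subset (h1.trans hB) (subset_union_left.trans hB)
      rw [if_neg hA, if_pos hB, if_neg hC, if_neg e1, if_pos e2]; omega
    · have e2 : X₁ ∪ X₂ ⊆ Z := union_subset (h3.trans hC) (h4.trans hC)
      rw [if_neg hA, if_neg hB, if_pos hC, if_pos e2]
      split_ifs <;> omega
    · have e1 : ¬ X₀ ∪ Y₀ ⊆ Z := fun h => hC (subset_union_left.trans h)
      rw [if_neg hA, if_neg hB, if_neg hC, if_neg e1]
      split_ifs <;> omega

lemma sound_one {γ : ℝ} (hγ0 : 0 ≤ γ) {X₀ Y₀ X Y : Finset (Fin n)}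
    (ha : X ⊆ X₀) (hb : X₀ ∪ Y₀ ⊆ X ∪ Y) (D : Multiset (Finset (Fin n)))
    (hs : satPI γ D X Y) : satPI γ D X₀ Y₀ := by
  rcases hs with h0 | hle
  · left; have := cntD_mono D ha; omega
  · right
    have c1 : (cntD D X₀ : ℝ) ≤ cntD D X := by exact_mod_cast cntD_mono D ha
    have c2 : (cntD D (X ∪ Y) : ℝ) ≤ cntD D (X₀ ∪ Y₀) := by exact_mod_cast cntD_mono D hb
    have := mul_le_mul_of_nonneg_left c1 hγ0
    linarith

lemma sound_two {γ : ℝ} (hγ0 : 1/2 ≤ γ) {X₀ Y₀ X₁ Y₁ X₂ Y₂ : Finset (Fin n)}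
    (h1 : X₁ ⊆ X₂ ∪ Y₂) (h2 : X₂ ⊆ X₁ ∪ Y₁) (h3 : X₁ ⊆ X₀) (h4 : X₂ ⊆ X₀)
    (h5 : X₀ ⊆ X₁ ∪ X₂ ∪ Y₁ ∪ Y₂) (h6 : Y₀ ⊆ X₀ ∪ Y₁) (h7 : Y₀ ⊆ X₀ ∪ Y₂)
    (D : Multiset (Finset (Fin n)))
    (s1 : satPI γ D X₁ Y₁) (s2 : satPI γ D X₂ Y₂) : satPI γ D X₀ Y₀ := by
  by_cases h0 : cntD D X₀ = 0
  · left; exact h0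
  right
  have hγ0' : (0:ℝ) ≤ γ := by linarith
  have hm1 : cntD D X₀ ≤ cntD D X₁ := cntD_mono D h3
  have hm2 : cntD D X₀ ≤ cntD D X₂ := cntD_mono D h4
  have hs1 : γ * (cntD D X₁ : ℝ) ≤ cntD D (X₁ ∪ Y₁) := by
    rcases s1 with h | h
    · omega
    · exact h
  have hs2 : γ * (cntD D X₂ : ℝ) ≤ cntD D (X₂ ∪ Y₂) := by
    rcases s2 with h | h
    · omega
    · exact h
  have key := count_key h1 h2 h3 h4 h5 h6 h7 D
  have hsu : cntD D (X₁ ∪ X₂) ≤ cntD D X₁ := cntD_mono D subset_union_left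
  have hsv : cntD D (X₁ ∪ X₂) ≤ cntD D X₂ := cntD_mono D subset_union_right
  have hms : cntD D X₀ ≤ cntD D (X₁ ∪ X₂) := cntD_mono D (union_subset h3 h4)
  have keyR : (cntD D (X₁ ∪ Y₁) : ℝ) + cntD D (X₂ ∪ Y₂) + cntD D X₀ ≤
      2 * cntD D (X₀ ∪ Y₀) + cntD D (X₁ ∪ X₂) := by exact_mod_cast key
  have hsuR : (cntD D (X₁ ∪ X₂) : ℝ) ≤ cntD D X₁ := by exact_mod_cast hsu
  have hsvR : (cntD D (X₁ ∪ X₂) : ℝ) ≤ cntD D X₂ := by exact_mod_cast hsv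
  have hmsR : (cntD D X₀ : ℝ) ≤ cntD D (X₁ ∪ X₂) := by exact_mod_cast hms
  have p1 : γ * ((cntD D (X₁ ∪ X₂) : ℝ) ) ≤ γ * cntD D X₁ := mul_le_mul_of_nonneg_left hsuR hγ0'
  have p2 : γ * ((cntD D (X₁ ∪ X₂) : ℝ) ) ≤ γ * cntD D X₂ := mul_le_mul_of_nonneg_left hsvR hγ0'
  have p3 : (2*γ - 1) * (cntD D X₀ : ℝ) ≤ (2*γ - 1) * cntD D (X₁ ∪ X₂) :=
    mul_le_mul_of_nonneg_left hmsR (by linarith)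
  nlinarith [p1, p2, p3, keyR, hs1, hs2]

end Stmt2Aux

set_option maxHeartbeats 1000000 in
theorem stmt2 {n : ℕ} (γ : ℝ) (hγ0 : 1/2 ≤ γ) (hγ1 : γ < 1)
    (X₀ Y₀ X₁ Y₁ X₂ Y₂ : Finset (Fin n)) :
    (∀ D : Multiset (Finset (Fin n)),
        satPI γ D X₁ Y₁ → satPI γ D X₂ Y₂ → satPI γ D X₀ Y₀) ↔
      (Y₀ ⊆ X₀ ∨
       (X₁ ⊆ X₀ ∧ X₀ ∪ Y₀ ⊆ X₁ ∪ Y₁) ∨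
       (X₂ ⊆ X₀ ∧ X₀ ∪ Y₀ ⊆ X₂ ∪ Y₂) ∨
       (X₁ ⊆ X₂ ∪ Y₂ ∧ X₂ ⊆ X₁ ∪ Y₁ ∧
        X₁ ⊆ X₀ ∧ X₂ ⊆ X₀ ∧
        X₀ ⊆ X₁ ∪ X₂ ∪ Y₁ ∪ Y₂ ∧
        Y₀ ⊆ X₀ ∪ Y₁ ∧ Y₀ ⊆ X₀ ∪ Y₂)) := by
  have hγp : (0:ℝ) < γ := by linarith
  have hγ0' : (0:ℝ) ≤ γ := le_of_lt hγp
  have h1γ : (0:ℝ) < 1 - γ := by linarith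
  constructor
  · intro hEnt
    by_cases ha : Y₀ ⊆ X₀
    · exact Or.inl ha
    by_cases hb1 : X₁ ⊆ X₀ ∧ X₀ ∪ Y₀ ⊆ X₁ ∪ Y₁
    · exact Or.inr (Or.inl hb1)
    by_cases hb2 : X₂ ⊆ X₀ ∧ X₀ ∪ Y₀ ⊆ X₂ ∪ Y₂
    · exact Or.inr (Or.inr (Or.inl hb2))
    refine Or.inr (Or.inr (Or.inr ?_))
    have hE : Stmt2Aux.Ent γ X₀ Y₀ X₁ Y₁ X₂ Y₂ := hEnt
    have hEs : Stmt2Aux.Ent γ X₀ Y₀ X₂ Y₂ X₁ Y₁ := fun D hB hA => hEnt D hA hB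
    obtain ⟨b, hb1', kb, kb'⟩ : ∃ b : ℕ, 1 ≤ b ∧ γ ≤ (b:ℝ) * (1 - γ) ∧ (b:ℝ) * (1 - γ) < 1 := by
      refine ⟨⌈γ / (1 - γ)⌉₊, Nat.one_le_ceil_iff.mpr (by positivity), ?_, ?_⟩
      · have := Nat.le_ceil (γ / (1 - γ))
        rw [div_le_iff₀ h1γ] at this
        linarith
      · have h := Nat.ceil_lt_add_one (show (0:ℝ) ≤ γ / (1 - γ) by positivity)
        have : ((⌈γ / (1 - γ)⌉₊:ℝ) - 1) < γ / (1 - γ) := by linarith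
        rw [lt_div_iff₀ h1γ] at this
        nlinarith
    have hbR : (1:ℝ) ≤ b := by exact_mod_cast hb1'
    have hbG : γ * (1 + (b:ℝ)) ≤ b := by nlinarith [kb]
    have hcast : ((b * b : ℕ):ℝ) = (b:ℝ) * (b:ℝ) := by push_cast; ring
    have hcast2 : ((b * (1 + b) : ℕ):ℝ) = (b:ℝ) * (1 + (b:ℝ)) := by push_cast; ring
    obtain ⟨P, hPlt, hPle⟩ : ∃ P : ℕ, (b:ℝ) * b * (1 - γ) < γ * P ∧
        γ * (P:ℝ) ≤ (b:ℝ) * b * (1 - γ) + γ := by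
      refine ⟨⌊(b:ℝ) * b * (1 - γ) / γ⌋₊ + 1, ?_, ?_⟩
      · have h := Nat.lt_floor_add_one ((b:ℝ) * b * (1 - γ) / γ)
        have h2 := mul_lt_mul_of_pos_right h hγp
        rw [div_mul_cancel₀ _ (ne_of_gt hγp)] at h2
        push_cast
        nlinarith
      · have h := Nat.floor_le (show (0:ℝ) ≤ (b:ℝ) * b * (1 - γ) / γ by positivity)
        have h2 := mul_le_mul_of_nonneg_right h hγ0'
        rw [div_mul_cancel₀ _ (ne_of_gt hγp)] at h2
        push_cast
        nlinarith
    have hp1 : ((b * b : ℕ):ℝ) < γ * ((P:ℝ) + ((b * b : ℕ):ℝ)) := by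
      rw [hcast]; nlinarith [hPlt]
    have hp2 : γ * ((P:ℝ) + ((b:ℕ):ℝ) + ((b * b : ℕ):ℝ)) ≤ ((b:ℕ):ℝ) + ((b * b : ℕ):ℝ) := by
      rw [hcast]; nlinarith [hPle, hbG]
    have hq : γ * (((b:ℕ):ℝ) + ((b * b : ℕ):ℝ)) ≤ ((b * b : ℕ):ℝ) := by
      rw [hcast]
      nlinarith [mul_le_mul_of_nonneg_right kb (show (0:ℝ) ≤ (b:ℝ) by linarith)]
    obtain ⟨r, hrR⟩ : ∃ r : ℕ, ((r:ℕ):ℝ) = (b:ℝ) - 1 := by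
      refine ⟨b - 1, ?_⟩; push_cast [hb1']; ring
    have hr1 : γ * (2 + (r:ℝ)) ≤ 1 + (r:ℝ) := by rw [hrR]; nlinarith [hbG]
    have hr2 : ((r:ℕ):ℝ) < γ * (1 + (r:ℝ)) := by rw [hrR]; nlinarith [kb']
    have hq1 : γ * (1 + ((b * (1 + b) : ℕ):ℝ) + ((b:ℕ):ℝ)) ≤ ((b * (1 + b) : ℕ):ℝ) := by
      rw [hcast2]
      nlinarith [mul_le_mul_of_nonneg_right hbG (show (0:ℝ) ≤ 1 + (b:ℝ) by linarith)]
    have hq2 : γ * (1 + ((b:ℕ):ℝ)) ≤ ((b:ℕ):ℝ) := hbG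
    -- Step 0: X₀ is covered by the union of the premise closures
    have h5 : X₀ ⊆ X₁ ∪ Y₁ ∪ (X₂ ∪ Y₂) := by
      by_contra hc
      exact Stmt2Aux.G1 hγp hbG ha hc subset_union_left subset_union_right hE
    have h5s : X₀ ⊆ X₂ ∪ Y₂ ∪ (X₁ ∪ Y₁) := h5.trans (by
      intro x hx; simp only [Finset.mem_union] at hx ⊢; tauto)
    -- Step 1: X₂ ⊆ X₀ and X₁ ⊆ X₀
    have h4 : X₂ ⊆ X₀ := by
      by_contra hc
      have hA : X₀ ∪ Y₀ ⊆ X₁ ∪ Y₁ := by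
        by_contra hA
        exact Stmt2Aux.S1 hγp hp1 hp2 hq ha hc h5 hA hE
      have hX1 : ¬ X₁ ⊆ X₀ := fun h => hb1 ⟨h, hA⟩
      have hB : X₀ ∪ Y₀ ⊆ X₂ ∪ Y₂ := by
        by_contra hB
        exact Stmt2Aux.S1 hγp hp1 hp2 hq ha hX1 h5s hB hEs
      exact Stmt2Aux.F1 hγp hX1 hc ha hE
    have h3 : X₁ ⊆ X₀ := by
      by_contra hc
      have hB : X₀ ∪ Y₀ ⊆ X₂ ∪ Y₂ := by
        by_contra hB
        exact Stmt2Aux.S1 hγp hp1 hp2 hq ha hc h5s hB hEs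
      exact hb2 ⟨h4, hB⟩
    have hN1 : ¬ X₀ ∪ Y₀ ⊆ X₁ ∪ Y₁ := fun h => hb1 ⟨h3, h⟩
    have hN2 : ¬ X₀ ∪ Y₀ ⊆ X₂ ∪ Y₂ := fun h => hb2 ⟨h4, h⟩
    -- Step 2: Y₀ ⊆ X₀ ∪ Y₁ and Y₀ ⊆ X₀ ∪ Y₂
    have h6 : Y₀ ⊆ X₀ ∪ Y₁ := by
      by_contra hc
      refine Stmt2Aux.S2 hγp hr1 hr2 (Z := X₀ ∪ Y₁) subset_union_left
        (fun hh => hc (subset_union_right.trans hh))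
        (union_subset (h3.trans subset_union_left) subset_union_right) hN2 hE
    have h7 : Y₀ ⊆ X₀ ∪ Y₂ := by
      by_contra hc
      refine Stmt2Aux.S2 hγp hr1 hr2 (Z := X₀ ∪ Y₂) subset_union_left
        (fun hh => hc (subset_union_right.trans hh))
        (union_subset (h4.trans subset_union_left) subset_union_right) hN1 hEs
    -- Step 3: mutual containment of the premise bodies in the closures
    have h2 : X₂ ⊆ X₁ ∪ Y₁ := by
      by_contra hc
      exact Stmt2Aux.S3 hγp hq1 hq2 ha hN1 hN2 hc hE
    have h1 : X₁ ⊆ X₂ ∪ Y₂ := by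
      by_contra hc
      exact Stmt2Aux.S3 hγp hq1 hq2 ha hN2 hN1 hc hEs
    exact ⟨h1, h2, h3, h4,
      h5.trans (by intro x hx; simp only [Finset.mem_union] at hx ⊢; tauto), h6, h7⟩
  · rintro (ha | ⟨hba, hbb⟩ | ⟨hba, hbb⟩ | ⟨h1, h2, h3, h4, h5, h6, h7⟩)
    · intro D _ _
      right
      rw [Finset.union_eq_left.mpr ha]
      have : (0:ℝ) ≤ (cntD D X₀ : ℝ) := by positivity
      nlinarith
    · exact fun D s1 _ => Stmt2Aux.sound_one hγ0' hba hbb D s1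
    · exact fun D _ s2 => Stmt2Aux.sound_one hγ0' hba hbb D s2
    · exact fun D s1 s2 => Stmt2Aux.sound_two hγ0 h1 h2 h3 h4 h5 h6 h7 D s1 s2
end

section
/- On the attribute set {A, B, C, D}, for every confidence parameter γ with 1/2 ≤ γ < 1, the entailment {A} → {B,C}, {A} → {B,D} ⊨_γ {A,C,D} → {B} holds; that is, every dataset in which both {A} → {B,C} and {A} → {B,D} have confidence at least γ also gives confidence at least γ to {A,C,D} → {B}. -/
open Finset

lemma cntD_countP {n : ℕ} (D : Multiset (Finset (Fin n))) (X : Finset (Fin n)) :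
    cntD D X = D.countP (fun Z => X ⊆ Z) := by
  simp [cntD, Multiset.countP_eq_card_filter]

lemma count_ineq {α : Type*} (p1 p2 p3 q1 q2 : α → Prop)
    [DecidablePred p1] [DecidablePred p2] [DecidablePred p3]
    [DecidablePred q1] [DecidablePred q2]
    (h : ∀ a, (if p1 a then 1 else 0) + (if p2 a then 1 else 0) + (if p3 a then 1 else 0)
        ≤ (if q1 a then 1 else 0) + (if q2 a then (1:ℕ) else 0)) (D : Multiset α) :
    D.countP p1 + D.countP p2 + D.countP p3 ≤ D.countP q1 + D.countP q2 := by
  induction D using Multiset.induction_on with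
  | empty => simp
  | cons a D ih =>
    simp only [Multiset.countP_cons]
    have := h a
    split_ifs at this ⊢ <;> omega

theorem stmt3 (γ : ℝ) (hγ0 : 1/2 ≤ γ) (hγ1 : γ < 1) :
    ∀ D : Multiset (Finset (Fin 4)),
      satPI γ D {0} {1, 2} → satPI γ D {0} {1, 3} →
      satPI γ D {0, 2, 3} {1} := by
  intro D hp1 hp2
  have e1 : ({0} ∪ {1,2} : Finset (Fin 4)) = {0,1,2} := by decide
  have e2 : ({0} ∪ {1,3} : Finset (Fin 4)) = {0,1,3} := by decide
  have e3 : ({0,2,3} ∪ {1} : Finset (Fin 4)) = {0,1,2,3} := by decide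
  simp only [satPI] at hp1 hp2 ⊢
  rw [e1] at hp1; rw [e2] at hp2
  set s := cntD D {0} with hs_def
  set x := cntD D {0,1,2} with hx_def
  set y := cntD D {0,1,3} with hy_def
  set t := cntD D {0,1,2,3} with ht_def
  set bad := D.countP (fun Z => ({0,2,3} : Finset (Fin 4)) ⊆ Z ∧ (1:Fin 4) ∉ Z) with hbad_def
  -- key counting facts
  have hsum : x + y + bad ≤ s + t := by
    rw [hx_def, hy_def, hs_def, ht_def, cntD_countP, cntD_countP, cntD_countP, cntD_countP]
    exact count_ineq _ _ _ _ _ (by decide) D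
  have hbx : bad + x + 0 ≤ s + 0 := by
    rw [hx_def, hs_def, cntD_countP, cntD_countP]
    have := count_ineq (fun Z : Finset (Fin 4) => ({0,2,3} : Finset (Fin 4)) ⊆ Z ∧ (1:Fin 4) ∉ Z)
      (fun Z => ({0,1,2} : Finset (Fin 4)) ⊆ Z) (fun _ => False)
      (fun Z => ({0} : Finset (Fin 4)) ⊆ Z) (fun _ => False) (by decide) D
    simpa using this
  have hdec : cntD D {0,2,3} + 0 + 0 ≤ t + bad ∧ t + bad + 0 ≤ cntD D {0,2,3} + 0 := by
    constructor
    · rw [ht_def, cntD_countP, cntD_countP, hbad_def]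
      have := count_ineq (fun Z : Finset (Fin 4) => ({0,2,3} : Finset (Fin 4)) ⊆ Z)
        (fun _ => False) (fun _ => False)
        (fun Z => ({0,1,2,3} : Finset (Fin 4)) ⊆ Z)
        (fun Z => ({0,2,3} : Finset (Fin 4)) ⊆ Z ∧ (1:Fin 4) ∉ Z) (by decide) D
      simpa using this
    · rw [ht_def, cntD_countP, cntD_countP, hbad_def]
      have := count_ineq (fun Z : Finset (Fin 4) => ({0,1,2,3} : Finset (Fin 4)) ⊆ Z)
        (fun Z => ({0,2,3} : Finset (Fin 4)) ⊆ Z ∧ (1:Fin 4) ∉ Z) (fun _ => False)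
        (fun Z => ({0,2,3} : Finset (Fin 4)) ⊆ Z) (fun _ => False) (by decide) D
      simpa using this
  have hdec' : cntD D {0,2,3} = t + bad := by omega
  have hts : t ≤ s := by
    rw [ht_def, hs_def, cntD_countP, cntD_countP]
    have := count_ineq (fun Z : Finset (Fin 4) => ({0,1,2,3} : Finset (Fin 4)) ⊆ Z)
      (fun _ => False) (fun _ => False)
      (fun Z => ({0} : Finset (Fin 4)) ⊆ Z) (fun _ => False) (by decide) D
    simpa using this
  by_cases hs : s = 0
  · left
    omega
  · right
    rw [e3]
    have h1 : γ * (s : ℝ) ≤ (x : ℝ) := hp1.resolve_left hs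
    have h2 : γ * (s : ℝ) ≤ (y : ℝ) := hp2.resolve_left hs
    rw [hdec']
    push_cast
    have h1g : (0:ℝ) ≤ 1 - γ := by linarith
    have h2g : (0:ℝ) ≤ 2*γ - 1 := by linarith
    have hsumR : (x:ℝ) + y + bad ≤ s + t := by exact_mod_cast hsum
    have hbxR : (bad:ℝ) + x ≤ s := by
      have : (bad:ℝ) + x + 0 ≤ s + 0 := by exact_mod_cast hbx
      linarith
    nlinarith [mul_le_mul_of_nonneg_left h1 h1g, mul_le_mul_of_nonneg_left h2 h1g,
      mul_le_mul_of_nonneg_left hsumR h1g, mul_le_mul_of_nonneg_left hbxR h2g]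
end

section
/- Let γ be a confidence parameter in [0,1] and let X₀ → Y₀, X₁ → Y₁, …, X_k → Y_k be partial implications over the attribute set [n]. Then the following are equivalent: (1) X₁ → Y₁, …, X_k → Y_k ⊨_γ X₀ → Y₀; (2) there exists a vector λ = (λ₁,…,λ_k) of nonnegative reals such that for every transaction Z ⊆ [n], ∑_{i=1}^{k} λ_i · w_Z(X_i → Y_i) ≤ w_Z(X₀ → Y₀). -/
open Finset

section Farkas

variable {E : Type*} [NormedAddCommGroup E] [InnerProductSpace ℝ E]
variable {ι : Type*} [Fintype ι]

local notation "⟪" x ", " y "⟫" => @inner ℝ _ _ x y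

/-- Nonnegative span of family `v`. -/
def coneSet (v : ι → E) : Set E :=
  {x | ∃ μ : ι → ℝ, (∀ i, 0 ≤ μ i) ∧ ∑ i, μ i • v i = x}

lemma cara_cone (v : ι → E) :
    ∀ (N : ℕ) (μ : ι → ℝ), (∀ i, 0 ≤ μ i) →
      (Finset.univ.filter fun i => μ i ≠ 0).card ≤ N →
      ∃ (s : Finset ι) (ν : ι → ℝ), LinearIndependent ℝ (fun i : ↥s => v (i : ι)) ∧
        (∀ i, 0 ≤ ν i) ∧ ∑ i ∈ s, ν i • v i = ∑ i, μ i • v i := by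
  classical
  intro N
  induction N with
  | zero =>
    intro μ hμ hcard
    have hT : (Finset.univ.filter fun i => μ i ≠ 0) = ∅ := Finset.card_eq_zero.mp (Nat.le_zero.mp hcard)
    have hz : ∀ i, μ i = 0 := by
      intro i
      by_contra h
      have : i ∈ (Finset.univ.filter fun i => μ i ≠ 0) := by simp [h]
      simp [hT] at this
    refine ⟨∅, 0, ?_, fun i => le_refl 0, ?_⟩
    · haveI : IsEmpty ((∅ : Finset ι) : Set ι) := by simp
      exact linearIndependent_empty_type
    · simp [hz]
  | succ N ih =>
    intro μ hμ hcard
    set T := Finset.univ.filter fun i => μ i ≠ 0 with hTdef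
    by_cases hLI : LinearIndependent ℝ (fun i : ↥T => v (i : ι))
    · refine ⟨T, μ, hLI, hμ, ?_⟩
      refine Finset.sum_subset (Finset.subset_univ _) fun i _ hi => ?_
      have : μ i = 0 := by by_contra h; exact hi (by simp [hTdef, h])
      simp [this]
    · obtain ⟨g, hg0, i₀', hgi₀⟩ := Fintype.not_linearIndependent_iff.mp hLI
      -- extend g to ι
      set d' : ι → ℝ := fun i => if h : i ∈ T then g ⟨i, h⟩ else 0 with hd'def
      have hd'sum : ∑ i, d' i • v i = 0 := by
        rw [← Finset.sum_subset (Finset.subset_univ T) (fun i _ hi => by simp [hd'def, dif_neg hi])]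
        rw [← hg0, ← Finset.sum_coe_sort T (fun i => d' i • v i)]
        refine Finset.sum_congr rfl fun i _ => ?_
        simp [hd'def, i.2]
      have hd'i₀ : d' (i₀' : ι) ≠ 0 := by simpa [hd'def, i₀'.2] using hgi₀
      -- WLOG some positive entry
      have key : ∀ d : ι → ℝ, (∑ i, d i • v i = 0) → (∀ i, d i ≠ 0 → i ∈ T) →
          ∀ i₀, 0 < d i₀ →
          ∃ (s : Finset ι) (ν : ι → ℝ), LinearIndependent ℝ (fun i : ↥s => v (i : ι)) ∧
            (∀ i, 0 ≤ ν i) ∧ ∑ i ∈ s, ν i • v i = ∑ i, μ i • v i := by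
        intro d hdsum hdsupp i₀ hdi₀
        set F := Finset.univ.filter fun i => 0 < d i with hFdef
        have hFne : F.Nonempty := ⟨i₀, by simp [hFdef, hdi₀]⟩
        obtain ⟨i₁, hi₁F, hi₁min⟩ := F.exists_min_image (fun i => μ i / d i) hFne
        have hdi₁ : 0 < d i₁ := by simpa [hFdef] using hi₁F
        set t := μ i₁ / d i₁ with htdef
        have ht0 : 0 ≤ t := div_nonneg (hμ i₁) hdi₁.le
        set μ' : ι → ℝ := fun i => μ i - t * d i with hμ'def
        have hμ'0 : ∀ i, 0 ≤ μ' i := by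
          intro i
          rcases le_or_gt (d i) 0 with hd | hd
          · have : t * d i ≤ 0 := mul_nonpos_of_nonneg_of_nonpos ht0 hd
            simp only [hμ'def]; linarith [hμ i]
          · have hiF : i ∈ F := by simp [hFdef, hd]
            have := hi₁min i hiF
            have : t * d i ≤ μ i := by
              rw [htdef]
              calc μ i₁ / d i₁ * d i ≤ μ i / d i * d i := by
                    exact mul_le_mul_of_nonneg_right (hi₁min i hiF) hd.le
                _ = μ i := div_mul_cancel₀ _ hd.ne'
            simp only [hμ'def]; linarith
        have hμ'i₁ : μ' i₁ = 0 := by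
          simp only [hμ'def, htdef]
          field_simp
          ring
        have hsupp' : (Finset.univ.filter fun i => μ' i ≠ 0) ⊆ T.erase i₁ := by
          intro i hi
          simp only [Finset.mem_filter, Finset.mem_univ, true_and] at hi
          refine Finset.mem_erase.mpr ⟨?_, ?_⟩
          · rintro rfl; exact hi hμ'i₁
          · by_contra hiT
            have h1 : μ i = 0 := by
              by_contra h; exact hiT (by simp [hTdef, h])
            have h2 : d i = 0 := by
              by_contra h; exact hiT (hdsupp i h)
            exact hi (by simp [hμ'def, h1, h2])
        have hi₁T : i₁ ∈ T := hdsupp i₁ hdi₁.ne'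
        have hcard' : (Finset.univ.filter fun i => μ' i ≠ 0).card ≤ N := by
          have h1 := Finset.card_le_card hsupp'
          have h2 : (T.erase i₁).card = T.card - 1 := Finset.card_erase_of_mem hi₁T
          have h3 : 1 ≤ T.card := Finset.card_pos.mpr ⟨i₁, hi₁T⟩
          omega
        obtain ⟨s, ν, hsLI, hν0, hνsum⟩ := ih μ' hμ'0 hcard'
        refine ⟨s, ν, hsLI, hν0, ?_⟩
        rw [hνsum]
        have : ∑ i, μ' i • v i = ∑ i, μ i • v i - t • ∑ i, d i • v i := by
          rw [Finset.smul_sum, ← Finset.sum_sub_distrib]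
          refine Finset.sum_congr rfl fun i _ => ?_
          simp [hμ'def, sub_smul, smul_smul]
        rw [this, hdsum, smul_zero, sub_zero]
      rcases lt_or_gt_of_ne hd'i₀ with hneg | hpos
      · refine key (fun i => -d' i) ?_ (fun i hi => ?_) i₀' (by exact neg_pos.mpr hneg)
        · simp only [neg_smul, Finset.sum_neg_distrib]
          rw [hd'sum]; simp
        · have : d' i ≠ 0 := by simpa using hi
          by_contra hiT
          exact this (by simp [hd'def, dif_neg hiT])
      · refine key d' hd'sum (fun i hi => ?_) i₀' hpos
        by_contra hiT
        exact hi (by simp [hd'def, dif_neg hiT])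

end Farkas

section Farkas2

variable {E : Type*} [NormedAddCommGroup E] [InnerProductSpace ℝ E]
variable {ι : Type*} [Fintype ι]

local notation "⟪" x ", " y "⟫" => @inner ℝ _ _ x y

lemma isClosed_coneSet (v : ι → E) : IsClosed (coneSet v) := by
  classical
  have hdecomp : coneSet v = ⋃ s ∈ {s : Finset ι | LinearIndependent ℝ (fun i : ↥s => v (i : ι))},
      {x | ∃ ν : ι → ℝ, (∀ i, 0 ≤ ν i) ∧ ∑ i ∈ s, ν i • v i = x} := by
    ext x
    constructor
    · rintro ⟨μ, hμ0, hμsum⟩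
      obtain ⟨s, ν, hLI, hν0, hνsum⟩ := cara_cone v (Finset.univ.filter fun i => μ i ≠ 0).card μ hμ0 le_rfl
      exact Set.mem_biUnion hLI ⟨ν, hν0, hνsum.trans hμsum⟩
    · rintro ⟨S, ⟨s, rfl⟩, hx⟩
      simp only [Set.mem_iUnion, Set.mem_setOf_eq] at hx
      obtain ⟨_, ν, hν0, hνsum⟩ := hx
      refine ⟨fun i => if i ∈ s then ν i else 0, fun i => by by_cases h : i ∈ s <;> simp [h, hν0 i], ?_⟩
      rw [← hνsum]
      rw [← Finset.sum_subset (Finset.subset_univ s) (fun i _ hi => by simp [hi])]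
      exact Finset.sum_congr rfl fun i hi => by simp [hi]
  rw [hdecomp]
  refine Set.Finite.isClosed_biUnion (Set.toFinite _) fun s hs => ?_
  -- s is linearly independent; the simplicial cone is closed
  have hLI : LinearIndependent ℝ (fun i : ↥s => v (i : ι)) := hs
  set L : (↥s → ℝ) →ₗ[ℝ] E :=
    { toFun := fun c => ∑ i : ↥s, c i • v (i : ι)
      map_add' := by intro a b; simp [add_smul, Finset.sum_add_distrib]
      map_smul' := by intro c a; simp [smul_smul, Finset.smul_sum] } with hLdef
  have hinj : LinearMap.ker L = ⊥ := by
    rw [LinearMap.ker_eq_bot']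
    intro c hc
    have := Fintype.linearIndependent_iff.mp hLI c hc
    exact funext this
  have hemb := LinearMap.isClosedEmbedding_of_injective (f := L) hinj
  have himg : {x | ∃ ν : ι → ℝ, (∀ i, 0 ≤ ν i) ∧ ∑ i ∈ s, ν i • v i = x}
      = L '' {c : ↥s → ℝ | ∀ i, 0 ≤ c i} := by
    ext x
    constructor
    · rintro ⟨ν, hν0, hνsum⟩
      refine ⟨fun i => ν i, fun i => hν0 i, ?_⟩
      simp only [hLdef, LinearMap.coe_mk, AddHom.coe_mk]
      rw [← hνsum]
      exact Finset.sum_coe_sort s (fun i => ν i • v i)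
    · rintro ⟨c, hc0, rfl⟩
      refine ⟨fun i => if h : i ∈ s then c ⟨i, h⟩ else 0, fun i => ?_, ?_⟩
      · by_cases h : i ∈ s
        · simpa [h] using hc0 _
        · simp [h]
      · simp only [hLdef, LinearMap.coe_mk, AddHom.coe_mk]
        rw [← Finset.sum_coe_sort s (fun i => (if h : i ∈ s then c ⟨i, h⟩ else 0) • v i)]
        exact Finset.sum_congr rfl fun i _ => by simp [i.2]
  rw [himg]
  refine hemb.isClosedMap _ ?_
  have : {c : ↥s → ℝ | ∀ i, 0 ≤ c i} = ⋂ i, (fun c : ↥s → ℝ => c i) ⁻¹' Set.Ici 0 := by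
    ext c; simp [Set.mem_iInter]
  rw [this]
  exact isClosed_iInter fun i => IsClosed.preimage (continuous_apply i) isClosed_Ici

lemma farkas [CompleteSpace E] (v : ι → E) (c : E)
    (h : c ∉ coneSet v) :
    ∃ y : E, (∀ i, 0 ≤ ⟪v i, y⟫) ∧ ⟪y, c⟫ < 0 := by
  classical
  set K : ConvexCone ℝ E :=
    { carrier := coneSet v
      smul_mem' := by
        rintro t ht x ⟨μ, hμ0, rfl⟩
        refine ⟨fun i => t * μ i, fun i => mul_nonneg ht.le (hμ0 i), ?_⟩
        rw [Finset.smul_sum]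
        exact Finset.sum_congr rfl fun i _ => by rw [smul_smul]
      add_mem' := by
        rintro x ⟨μ, hμ0, rfl⟩ y ⟨ν, hν0, rfl⟩
        refine ⟨fun i => μ i + ν i, fun i => add_nonneg (hμ0 i) (hν0 i), ?_⟩
        rw [← Finset.sum_add_distrib]
        exact Finset.sum_congr rfl fun i _ => by rw [add_smul] } with hKdef
  have hne : (K : Set E).Nonempty := ⟨0, ⟨0, fun i => le_refl 0, by simp⟩⟩
  have hclosed : IsClosed (K : Set E) := isClosed_coneSet v
  obtain ⟨y, hy1, hy2⟩ : ∃ y : E, (∀ x ∈ coneSet v, 0 ≤ ⟪x, y⟫) ∧ ⟪y, c⟫ < 0 := by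
    let C : ProperCone ℝ E :=
      { carrier := coneSet v
        add_mem' := fun ha hb => K.add_mem' ha hb
        zero_mem' := ⟨0, fun i => le_refl 0, by simp⟩
        smul_mem' := by
          rintro t x ⟨μ, hμ0, rfl⟩
          refine ⟨fun i => (t : ℝ) * μ i, fun i => mul_nonneg t.2 (hμ0 i), ?_⟩
          change _ = (t : ℝ) • ∑ i, μ i • v i
          rw [Finset.smul_sum]
          exact Finset.sum_congr rfl fun i _ => by rw [smul_smul]
        isClosed' := hclosed }
    obtain ⟨y, hy1, hy2⟩ := ProperCone.hyperplane_separation' (x₀ := c) C h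
    exact ⟨y, fun x hx => hy1 x hx, by rw [real_inner_comm]; exact hy2⟩
  refine ⟨y, fun i => ?_, hy2⟩
  refine hy1 (v i) ?_
  refine ⟨fun j => if j = i then 1 else 0, fun j => by positivity, ?_⟩
  simp [ite_smul]

end Farkas2

section Sat

variable {n : ℕ} (γ : ℝ)

lemma wt_eq (Z X Y : Finset (Fin n)) :
    wt γ Z X Y = (if X ∪ Y ⊆ Z then (1:ℝ) else 0) - γ * (if X ⊆ Z then 1 else 0) := by
  unfold wt
  by_cases h1 : X ∪ Y ⊆ Z
  · have h2 : X ⊆ Z := (Finset.subset_union_left).trans h1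
    simp [h1, h2]
  · by_cases h2 : X ⊆ Z <;> simp [h1, h2]

lemma sum_ind (D : Multiset (Finset (Fin n))) (p : Finset (Fin n) → Prop) [DecidablePred p] :
    (D.map fun Z => if p Z then (1:ℝ) else 0).sum = ((D.filter p).card : ℝ) := by
  induction D using Multiset.induction_on with
  | empty => simp
  | cons a s ih =>
    by_cases h : p a <;> simp [h, ih] <;> ring

lemma sum_wt (D : Multiset (Finset (Fin n))) (X Y : Finset (Fin n)) :
    (D.map fun Z => wt γ Z X Y).sum = (cntD D (X ∪ Y) : ℝ) - γ * (cntD D X : ℝ) := by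
  classical
  have : (D.map fun Z => wt γ Z X Y).sum
      = (D.map fun Z => if X ∪ Y ⊆ Z then (1:ℝ) else 0).sum
        - γ * (D.map fun Z => if X ⊆ Z then (1:ℝ) else 0).sum := by
    induction D using Multiset.induction_on with
    | empty => simp
    | cons a s ih =>
      simp only [Multiset.map_cons, Multiset.sum_cons, ih, wt_eq γ a X Y]
      push_cast
      ring
  rw [this, sum_ind, sum_ind]
  rfl

lemma cnt_mono (D : Multiset (Finset (Fin n))) (X Y : Finset (Fin n)) :
    cntD D (X ∪ Y) ≤ cntD D X := by
  classical
  apply Multiset.card_le_card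
  apply Multiset.monotone_filter_right
  intro Z hZ
  exact (Finset.subset_union_left).trans hZ

lemma satPI_iff (D : Multiset (Finset (Fin n))) (X Y : Finset (Fin n)) :
    satPI γ D X Y ↔ 0 ≤ (D.map fun Z => wt γ Z X Y).sum := by
  rw [sum_wt]
  constructor
  · rintro (h | h)
    · have h2 : cntD D (X ∪ Y) = 0 := Nat.le_zero.mp (h ▸ cnt_mono D X Y)
      simp [h, h2]
    · linarith
  · intro h
    right; linarith

lemma sum_map_sum (D : Multiset (Finset (Fin n))) {k : ℕ} (g : Fin k → Finset (Fin n) → ℝ) :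
    (D.map fun Z => ∑ i, g i Z).sum = ∑ i, (D.map (g i)).sum := by
  induction D using Multiset.induction_on with
  | empty => simp
  | cons a s ih => simp [ih, Finset.sum_add_distrib]

lemma sum_map_mk {n : ℕ} (m : Finset (Fin n) → ℕ) (f : Finset (Fin n) → ℝ) :
    ((Finset.univ.sum fun Z => (m Z) • ({Z} : Multiset (Finset (Fin n)))).map f).sum
      = ∑ Z, (m Z : ℝ) * f Z := by
  classical
  induction (Finset.univ : Finset (Finset (Fin n))) using Finset.induction_on with
  | empty => simp
  | insert _ _ hnotmem ih =>
    rw [Finset.sum_insert hnotmem, Finset.sum_insert hnotmem, Multiset.map_add,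
      Multiset.sum_add, ih]
    congr 1
    rw [Multiset.map_nsmul, Multiset.sum_nsmul]
    simp [nsmul_eq_mul]

end Sat

section Rounding

lemma rat_scale (q : ℚ) (hq : 0 < q) (N : ℕ) (hd : q.den ∣ N) : ∃ m : ℕ, (m : ℚ) = q * N := by
  obtain ⟨t, ht⟩ := hd
  refine ⟨q.num.toNat * t, ?_⟩
  have hnum : (0:ℤ) < q.num := Rat.num_pos.mpr hq
  have hden : ((q.den : ℚ)) ≠ 0 := Nat.cast_ne_zero.mpr q.den_nz
  have h1 : q * (q.den : ℚ) = (q.num : ℚ) := by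
    nth_rewrite 1 [← Rat.num_div_den q]
    rw [div_mul_cancel₀ _ hden]
  have h2 : (q.num.toNat : ℚ) = (q.num : ℚ) := by exact_mod_cast Int.toNat_of_nonneg hnum.le
  push_cast [ht]
  rw [h2, ← mul_assoc, h1]

lemma rounding {ι : Type*} [Fintype ι] [DecidableEq ι] {k : ℕ}
    (w : Fin k → ι → ℝ) (w0 : ι → ℝ) (hb : ∀ i Z, |w i Z| ≤ 1) (hb0 : ∀ Z, |w0 Z| ≤ 1)
    (Y : ι → ℝ) (hY : ∀ Z, 0 ≤ Y Z)
    (hprem : ∀ i, 0 < ∑ Z, Y Z * w i Z) (hconc : ∑ Z, Y Z * w0 Z < 0) :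
    ∃ m : ι → ℕ, (∀ i, 0 ≤ ∑ Z, (m Z : ℝ) * w i Z) ∧ ∑ Z, (m Z : ℝ) * w0 Z < 0 := by
  classical
  set c : ℕ := Fintype.card ι with hc
  set S : Finset ℝ := insert (-(∑ Z, Y Z * w0 Z)) ((Finset.univ : Finset (Fin k)).image
    fun i => ∑ Z, Y Z * w i Z) with hS
  have hSne : S.Nonempty := Finset.insert_nonempty _ _
  set m₀ : ℝ := S.min' hSne with hm₀
  have hSpos : ∀ x ∈ S, 0 < x := by
    intro x hx
    rw [hS] at hx
    rcases Finset.mem_insert.mp hx with h | h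
    · rw [h]; linarith
    · obtain ⟨i, _, hi⟩ := Finset.mem_image.mp h
      rw [← hi]; exact hprem i
  have hm₀pos : 0 < m₀ := hSpos _ (S.min'_mem hSne)
  have hm₀le : ∀ i, m₀ ≤ ∑ Z, Y Z * w i Z := fun i =>
    Finset.min'_le _ _ (Finset.mem_insert_of_mem (Finset.mem_image_of_mem _ (Finset.mem_univ i)))
  have hm₀le0 : m₀ ≤ -(∑ Z, Y Z * w0 Z) := Finset.min'_le _ _ (Finset.mem_insert_self _ _)
  set δ : ℝ := m₀ / (c + 1) with hδ
  have hδpos : 0 < δ := div_pos hm₀pos (by positivity)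
  have hex : ∀ Z : ι, ∃ q : ℚ, Y Z < q ∧ (q : ℝ) < Y Z + δ :=
    fun Z => exists_rat_btwn (lt_add_of_pos_right (Y Z) hδpos)
  choose q hq1 hq2 using hex
  have hqpos : ∀ Z, 0 < q Z := fun Z => by
    have h3 : (0:ℝ) < (q Z : ℝ) := lt_of_le_of_lt (hY Z) (hq1 Z)
    exact_mod_cast h3
  have hpert : ∀ v : ι → ℝ, (∀ Z, |v Z| ≤ 1) →
      |∑ Z, ((q Z : ℝ) - Y Z) * v Z| < m₀ := by
    intro v hv
    calc |∑ Z, ((q Z : ℝ) - Y Z) * v Z| ≤ ∑ Z, |((q Z : ℝ) - Y Z) * v Z| :=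
          Finset.abs_sum_le_sum_abs _ _
      _ ≤ ∑ _Z : ι, δ := by
          refine Finset.sum_le_sum fun Z _ => ?_
          rw [abs_mul]
          have h1 : |(q Z : ℝ) - Y Z| ≤ δ := by
            rw [abs_of_pos (by linarith [hq1 Z])]
            linarith [hq2 Z]
          calc |(q Z : ℝ) - Y Z| * |v Z| ≤ δ * 1 :=
              mul_le_mul h1 (hv Z) (abs_nonneg _) hδpos.le
            _ = δ := mul_one δ
      _ = c * δ := by rw [Finset.sum_const, hc]; simp [nsmul_eq_mul]
      _ < m₀ := by
          calc (c:ℝ) * δ = m₀ * ((c:ℝ)/(c+1)) := by rw [hδ]; ring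
            _ < m₀ * 1 := by
                refine mul_lt_mul_of_pos_left ?_ hm₀pos
                rw [div_lt_one (by positivity)]; linarith
            _ = m₀ := mul_one m₀
  -- strict inequalities for q
  have hsplit : ∀ v : ι → ℝ, ∑ Z, (q Z : ℝ) * v Z = (∑ Z, Y Z * v Z) + ∑ Z, ((q Z:ℝ) - Y Z) * v Z := by
    intro v
    rw [← Finset.sum_add_distrib]
    exact Finset.sum_congr rfl fun Z _ => by ring
  have hq_prem : ∀ i, 0 < ∑ Z, (q Z : ℝ) * w i Z := by
    intro i
    rw [hsplit]
    have := hpert (w i) (hb i)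
    have h2 := hm₀le i
    have := neg_abs_le (∑ Z, ((q Z:ℝ) - Y Z) * w i Z)
    linarith
  have hq_conc : ∑ Z, (q Z : ℝ) * w0 Z < 0 := by
    rw [hsplit]
    have := hpert w0 hb0
    have := le_abs_self (∑ Z, ((q Z:ℝ) - Y Z) * w0 Z)
    linarith
  -- scale to naturals
  set N : ℕ := ∏ Z : ι, (q Z).den with hN
  have hNpos : 0 < N := Finset.prod_pos fun Z _ => (q Z).den_pos
  have hdvd : ∀ Z : ι, (q Z).den ∣ N := fun Z => Finset.dvd_prod_of_mem _ (Finset.mem_univ Z)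
  choose m hm using fun Z => rat_scale (q Z) (hqpos Z) N (hdvd Z)
  have hmR : ∀ Z, (m Z : ℝ) = (q Z : ℝ) * N := by
    intro Z
    have := hm Z
    exact_mod_cast congrArg (fun x : ℚ => (x : ℝ)) this
  have hscale : ∀ v : ι → ℝ, ∑ Z, (m Z : ℝ) * v Z = N * ∑ Z, (q Z : ℝ) * v Z := by
    intro v
    rw [Finset.mul_sum]
    exact Finset.sum_congr rfl fun Z _ => by rw [hmR Z]; ring
  refine ⟨m, fun i => ?_, ?_⟩
  · rw [hscale]
    have := hq_prem i
    positivity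
  · rw [hscale]
    have hN' : (0:ℝ) < N := by exact_mod_cast hNpos
    exact mul_neg_of_pos_of_neg hN' hq_conc

lemma round_gamma_one {ι : Type*} [Fintype ι] {k : ℕ}
    (w : Fin k → ι → ℝ) (w0 : ι → ℝ)
    (hw : ∀ i Z, w i Z ≤ 0) (hw0 : ∀ Z, w0 Z ≤ 0)
    (Y : ι → ℝ) (hY : ∀ Z, 0 ≤ Y Z)
    (hprem : ∀ i, 0 ≤ ∑ Z, Y Z * w i Z) (hconc : ∑ Z, Y Z * w0 Z < 0) :
    ∃ m : ι → ℕ, (∀ i, 0 ≤ ∑ Z, (m Z : ℝ) * w i Z) ∧ ∑ Z, (m Z : ℝ) * w0 Z < 0 := by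
  classical
  refine ⟨fun Z => if 0 < Y Z then 1 else 0, fun i => ?_, ?_⟩
  all_goals push_cast
  · have hzero : ∀ Z ∈ Finset.univ, Y Z * w i Z = 0 := by
      rw [← Finset.sum_eq_zero_iff_of_nonpos
        (fun Z _ => mul_nonpos_of_nonneg_of_nonpos (hY Z) (hw i Z))]
      exact le_antisymm (Finset.sum_nonpos
        (fun Z _ => mul_nonpos_of_nonneg_of_nonpos (hY Z) (hw i Z))) (hprem i)
    refine ge_of_eq (Finset.sum_eq_zero fun Z _ => ?_)
    by_cases h : 0 < Y Z
    · have := hzero Z (Finset.mem_univ Z)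
      have hwz : w i Z = 0 := by
        rcases mul_eq_zero.mp this with h' | h'
        · exact absurd h' (ne_of_gt h)
        · exact h'
      simp [h, hwz]
    · simp [h]
  · obtain ⟨Z₀, _, hZ₀⟩ : ∃ Z ∈ Finset.univ, Y Z * w0 Z < (0:ℝ) := by
      by_contra hcon
      push_neg at hcon
      exact absurd (Finset.sum_nonneg fun Z hZ => hcon Z hZ) (not_le.mpr hconc)
    have hYZ₀ : 0 < Y Z₀ := by
      rcases (hY Z₀).lt_or_eq with h | h
      · exact h
      · rw [← h] at hZ₀; simp at hZ₀
    have hw0Z₀ : w0 Z₀ < 0 := by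
      by_contra h
      push_neg at h
      exact absurd (mul_nonneg (hY Z₀) h) (not_le.mpr hZ₀)
    calc ∑ Z, (if 0 < Y Z then (1:ℝ) else 0) * w0 Z
        < ∑ _Z : ι, (0:ℝ) := by
          refine Finset.sum_lt_sum (fun Z _ => ?_) ⟨Z₀, Finset.mem_univ Z₀, ?_⟩
          · by_cases h : 0 < Y Z <;> simp [h, hw0 Z]
          · simp [hYZ₀, hw0Z₀]
      _ = 0 := by simp

end Rounding

section Main

local notation "⟪" x ", " y "⟫" => @inner ℝ _ _ x y

lemma abs_wt_le {n : ℕ} {γ : ℝ} (hγ0 : 0 ≤ γ) (hγ1 : γ ≤ 1) (Z X Y : Finset (Fin n)) :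
    |wt γ Z X Y| ≤ 1 := by
  unfold wt
  split_ifs <;> rw [abs_le] <;> constructor <;> linarith

lemma wt_nonpos {n : ℕ} (Z X Y : Finset (Fin n)) : wt 1 Z X Y ≤ 0 := by
  unfold wt; split_ifs <;> norm_num

lemma multiset_sum_map_le {α : Type*} (D : Multiset α) (f g : α → ℝ) (h : ∀ a, f a ≤ g a) :
    (D.map f).sum ≤ (D.map g).sum := by
  induction D using Multiset.induction_on with
  | empty => simp
  | cons a s ih => simp only [Multiset.map_cons, Multiset.sum_cons]; exact add_le_add (h a) ih

set_option maxHeartbeats 1000000 in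
theorem stmt5 {n k : ℕ} (γ : ℝ) (hγ0 : 0 ≤ γ) (hγ1 : γ ≤ 1)
    (P : Fin k → Finset (Fin n) × Finset (Fin n)) (X₀ Y₀ : Finset (Fin n)) :
    entailsFrom γ P Finset.univ X₀ Y₀ ↔
      ∃ lam : Fin k → ℝ, (∀ i, 0 ≤ lam i) ∧
        ∀ Z : Finset (Fin n),
          ∑ i, lam i * wt γ Z (P i).1 (P i).2 ≤ wt γ Z X₀ Y₀ := by
  classical
  constructor
  · -- hard direction: entailment implies existence of λ
    intro hent
    by_contra hno
    set v : (Fin k ⊕ Finset (Fin n)) → EuclideanSpace ℝ (Finset (Fin n)) :=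
      Sum.elim
        (fun i => ∑ Z : Finset (Fin n), wt γ Z (P i).1 (P i).2 • EuclideanSpace.single Z (1:ℝ))
        (fun W => EuclideanSpace.single W (1:ℝ)) with hv
    set cvec : EuclideanSpace ℝ (Finset (Fin n)) :=
      ∑ Z : Finset (Fin n), wt γ Z X₀ Y₀ • EuclideanSpace.single Z (1:ℝ) with hcvec
    -- inner product computations
    have hinner_single : ∀ (f : Finset (Fin n) → ℝ) (Z : Finset (Fin n)),
        ⟪(∑ W : Finset (Fin n), f W • EuclideanSpace.single W (1:ℝ)),
          EuclideanSpace.single Z (1:ℝ)⟫ = f Z := by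
      intro f Z
      rw [sum_inner]
      have : ∀ W : Finset (Fin n),
          ⟪f W • EuclideanSpace.single W (1:ℝ), EuclideanSpace.single Z (1:ℝ)⟫
            = if W = Z then f W else 0 := by
        intro W
        rw [real_inner_smul_left, EuclideanSpace.inner_single_left]
        by_cases h : W = Z <;> simp [EuclideanSpace.single_apply, h]
      simp_rw [this]
      simp
    have hinner_y : ∀ (f : Finset (Fin n) → ℝ) (y : EuclideanSpace ℝ (Finset (Fin n))),
        ⟪(∑ W : Finset (Fin n), f W • EuclideanSpace.single W (1:ℝ)), y⟫
          = ∑ W : Finset (Fin n), f W * y W := by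
      intro f y
      rw [sum_inner]
      refine Finset.sum_congr rfl fun W _ => ?_
      rw [real_inner_smul_left, EuclideanSpace.inner_single_left]
      simp
    -- cvec is not in the cone
    have hcnot : cvec ∉ coneSet v := by
      rintro ⟨μ, hμ0, hμsum⟩
      apply hno
      refine ⟨fun i => μ (Sum.inl i), fun i => hμ0 _, fun Z => ?_⟩
      have h := congrArg (fun x => ⟪x, EuclideanSpace.single Z (1:ℝ)⟫) hμsum
      rw [sum_inner] at h
      have hL : ∀ j, ⟪μ j • v j, EuclideanSpace.single Z (1:ℝ)⟫
          = μ j * ⟪v j, EuclideanSpace.single Z (1:ℝ)⟫ := fun j => real_inner_smul_left _ _ _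
      simp_rw [hL] at h
      rw [Fintype.sum_sum_type] at h
      have hinl : ∀ i : Fin k, ⟪v (Sum.inl i), EuclideanSpace.single Z (1:ℝ)⟫
          = wt γ Z (P i).1 (P i).2 := by
        intro i
        rw [hv]
        simp only [Sum.elim_inl]
        exact hinner_single _ Z
      have hinr : ∀ W : Finset (Fin n), ⟪v (Sum.inr W), EuclideanSpace.single Z (1:ℝ)⟫
          = if W = Z then 1 else 0 := by
        intro W
        rw [hv]
        simp only [Sum.elim_inr]
        rw [EuclideanSpace.inner_single_left]
        by_cases h : W = Z <;> simp [EuclideanSpace.single_apply, h]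
      simp_rw [hinl, hinr] at h
      have hsum2 : ∑ W : Finset (Fin n), μ (Sum.inr W) * (if W = Z then (1:ℝ) else 0)
          = μ (Sum.inr Z) := by
        rw [Finset.sum_congr rfl (fun W _ => by rw [mul_ite, mul_one, mul_zero])]
        rw [Finset.sum_ite_eq' Finset.univ Z (fun W => μ (Sum.inr W))]
        simp
      rw [hsum2, hcvec, hinner_single] at h
      have := hμ0 (Sum.inr Z)
      linarith [h.le, h.ge]
    -- separation
    obtain ⟨y, hy1, hy2⟩ := farkas v cvec hcnot
    have hYpos : ∀ Z : Finset (Fin n), 0 ≤ y Z := by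
      intro Z
      have := hy1 (Sum.inr Z)
      rw [hv] at this
      simp only [Sum.elim_inr] at this
      rw [EuclideanSpace.inner_single_left] at this
      simpa using this
    have hprem : ∀ i, 0 ≤ ∑ Z : Finset (Fin n), y Z * wt γ Z (P i).1 (P i).2 := by
      intro i
      have := hy1 (Sum.inl i)
      rw [hv] at this
      simp only [Sum.elim_inl] at this
      rw [hinner_y] at this
      calc (0:ℝ) ≤ _ := this
        _ = ∑ Z : Finset (Fin n), y Z * wt γ Z (P i).1 (P i).2 :=
          Finset.sum_congr rfl fun Z _ => mul_comm _ _
    have hconc : ∑ Z : Finset (Fin n), y Z * wt γ Z X₀ Y₀ < 0 := by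
      have h := hy2
      rw [real_inner_comm, hcvec, hinner_y] at h
      calc ∑ Z : Finset (Fin n), y Z * wt γ Z X₀ Y₀
          = ∑ Z : Finset (Fin n), wt γ Z X₀ Y₀ * y Z :=
            Finset.sum_congr rfl fun Z _ => mul_comm _ _
        _ < 0 := h
    -- rounding to natural multiplicities
    obtain ⟨m, hm1, hm2⟩ : ∃ m : Finset (Fin n) → ℕ,
        (∀ i, 0 ≤ ∑ Z : Finset (Fin n), (m Z : ℝ) * wt γ Z (P i).1 (P i).2) ∧
          ∑ Z : Finset (Fin n), (m Z : ℝ) * wt γ Z X₀ Y₀ < 0 := by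
      rcases eq_or_lt_of_le hγ1 with hγeq | hγlt
      · subst hγeq
        exact round_gamma_one (fun i Z => wt 1 Z (P i).1 (P i).2) (fun Z => wt 1 Z X₀ Y₀)
          (fun i Z => wt_nonpos Z _ _) (fun Z => wt_nonpos Z _ _) y hYpos hprem hconc
      · -- γ < 1 : perturb to make premise inequalities strict
        set S0 : ℝ := ∑ Z : Finset (Fin n), y Z * wt γ Z X₀ Y₀ with hS0
        set t : ℝ := (-S0) / (2 * (1 - γ)) with ht
        have htpos : 0 < t := div_pos (by rw [hS0] at *; linarith) (by linarith)
        set Y' : Finset (Fin n) → ℝ :=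
          fun Z => y Z + (if Z = (Finset.univ : Finset (Fin n)) then t else 0) with hY'
        have hwtuniv : ∀ X Y : Finset (Fin n), wt γ (Finset.univ : Finset (Fin n)) X Y = 1 - γ := by
          intro X Y; unfold wt; rw [if_pos (Finset.subset_univ _)]
        have hsplit : ∀ w : Finset (Fin n) → ℝ,
            ∑ Z : Finset (Fin n), Y' Z * w Z
              = (∑ Z : Finset (Fin n), y Z * w Z) + t * w (Finset.univ : Finset (Fin n)) := by
          intro w
          rw [hY']
          simp_rw [add_mul]
          rw [Finset.sum_add_distrib]
          congr 1
          rw [Finset.sum_congr rfl (fun Z _ => by rw [ite_mul, zero_mul])]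
          rw [Finset.sum_ite_eq' Finset.univ (Finset.univ : Finset (Fin n))
            (fun Z => t * w Z)]
          simp
        refine rounding (fun i Z => wt γ Z (P i).1 (P i).2) (fun Z => wt γ Z X₀ Y₀)
          (fun i Z => abs_wt_le hγ0 hγ1 Z _ _) (fun Z => abs_wt_le hγ0 hγ1 Z _ _)
          Y' (fun Z => ?_) (fun i => ?_) ?_
        · rw [hY']
          have := hYpos Z
          by_cases h : Z = (Finset.univ : Finset (Fin n)) <;> simp [h] <;> linarith [hYpos (Finset.univ : Finset (Fin n)), htpos]
        · rw [hsplit]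
          beta_reduce
          rw [hwtuniv]
          have h1 := hprem i
          have h2 : 0 < t * (1 - γ) := mul_pos htpos (by linarith)
          linarith
        · rw [hsplit]
          beta_reduce
          rw [hwtuniv]
          have h3 : t * (1 - γ) = -S0 / 2 := by
            have hne : (1:ℝ) - γ ≠ 0 := by linarith
            rw [ht]
            field_simp
          rw [h3, ← hS0]
          have : S0 < 0 := hconc
          linarith
    -- build the dataset and contradict entailment
    set D : Multiset (Finset (Fin n)) :=
      Finset.univ.sum (fun Z : Finset (Fin n) => (m Z) • ({Z} : Multiset (Finset (Fin n)))) with hD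
    have hsat : ∀ i ∈ (Finset.univ : Finset (Fin k)), satPI γ D (P i).1 (P i).2 := by
      intro i _
      rw [satPI_iff, hD, sum_map_mk]
      exact hm1 i
    have hfin := hent D hsat
    rw [satPI_iff, hD, sum_map_mk] at hfin
    linarith
  · -- easy direction
    rintro ⟨lam, hlam0, hlam⟩ D hD
    rw [satPI_iff]
    have h1 : ∀ i, 0 ≤ (D.map fun Z => wt γ Z (P i).1 (P i).2).sum :=
      fun i => (satPI_iff γ D _ _).mp (hD i (Finset.mem_univ i))
    have h2 : (D.map fun Z => ∑ i, lam i * wt γ Z (P i).1 (P i).2).sum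
        ≤ (D.map fun Z => wt γ Z X₀ Y₀).sum :=
      multiset_sum_map_le D _ _ fun Z => hlam Z
    have h3 : (0:ℝ) ≤ (D.map fun Z => ∑ i, lam i * wt γ Z (P i).1 (P i).2).sum := by
      rw [sum_map_sum D (fun i Z => lam i * wt γ Z (P i).1 (P i).2)]
      refine Finset.sum_nonneg fun i _ => ?_
      rw [Multiset.sum_map_mul_left]
      exact mul_nonneg (hlam0 i) (h1 i)
    linarith

end Main
end

section
/- Let γ be a confidence parameter with 0 < γ < 1, let X₀ → Y₀, X₁ → Y₁, …, X_k → Y_k be partial implications over [n] with k ≥ 1, and assume that the entailment X₁ → Y₁, …, X_k → Y_k ⊨_γ X₀ → Y₀ holds properly. Then X₀Y₀ ⊆ X₁Y₁ ∪ ⋯ ∪ X_kY_k. -/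
open Finset

lemma cnt_single {n : ℕ} (Z X : Finset (Fin n)) :
    cntD {Z} X = if X ⊆ Z then 1 else 0 := by
  simp [cntD, Multiset.filter_singleton]; split <;> simp

lemma cnt_add_rep {n : ℕ} (D : Multiset (Finset (Fin n))) (m : ℕ) (Z X : Finset (Fin n)) :
    cntD (D + Multiset.replicate m Z) X = cntD D X + if X ⊆ Z then m else 0 := by
  simp only [cntD, Multiset.filter_add, Multiset.card_add]
  congr 1
  by_cases h : X ⊆ Z
  · rw [if_pos h, Multiset.filter_eq_self.mpr (fun b hb => (Multiset.eq_of_mem_replicate hb) ▸ h),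
      Multiset.card_replicate]
  · rw [if_neg h, Multiset.filter_eq_nil.mpr (fun b hb => (Multiset.eq_of_mem_replicate hb) ▸ h),
      Multiset.card_zero]

lemma cnt_le_card {n : ℕ} (D : Multiset (Finset (Fin n))) (X : Finset (Fin n)) :
    cntD D X ≤ Multiset.card D := Multiset.card_le_card (Multiset.filter_le _ _)

theorem stmt7 {n k : ℕ} (γ : ℝ) (hγ0 : 0 < γ) (hγ1 : γ < 1) (hk : 1 ≤ k)
    (P : Fin k → Finset (Fin n) × Finset (Fin n)) (X₀ Y₀ : Finset (Fin n))
    (hproper : properFrom γ P Finset.univ X₀ Y₀) :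
    X₀ ∪ Y₀ ⊆ Finset.univ.biUnion (fun i => (P i).1 ∪ (P i).2) := by
  intro a ha
  by_contra hmem
  simp only [Finset.mem_biUnion, Finset.mem_univ, true_and, not_exists] at hmem
  obtain ⟨hent, hmin⟩ := hproper
  have hsub : ∀ i : Fin k, (P i).1 ∪ (P i).2 ⊆ Finset.univ.erase a := fun i =>
    Finset.subset_erase.mpr ⟨Finset.subset_univ _, hmem i⟩
  by_cases haX : a ∈ X₀
  · -- a ∈ X₀ : entailment holds already from ∅, contradiction with properness
    haveI : Nonempty (Fin k) := Fin.pos_iff_nonempty.mp hk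
    apply hmin ∅ (Finset.empty_ssubset.mpr Finset.univ_nonempty)
    intro D _
    set c : ℕ := Multiset.card D with hc
    set m : ℕ := ⌈γ * c / (1 - γ)⌉₊ with hm
    set D' := D + Multiset.replicate m (Finset.univ.erase a) with hD'
    have hg1 : (0:ℝ) < 1 - γ := by linarith
    have hprem : ∀ i ∈ (Finset.univ : Finset (Fin k)), satPI γ D' (P i).1 (P i).2 := by
      intro i _
      right
      have h1 : (P i).1 ⊆ Finset.univ.erase a :=
        (Finset.subset_union_left).trans (hsub i)
      have h2 : (P i).1 ∪ (P i).2 ⊆ Finset.univ.erase a := hsub i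
      rw [hD', cnt_add_rep, cnt_add_rep, if_pos h1, if_pos h2]
      push_cast
      have hcle : (cntD D (P i).1 : ℝ) ≤ c := by exact_mod_cast cnt_le_card D _
      have hmge : γ * c / (1 - γ) ≤ (m : ℝ) := Nat.le_ceil _
      have : γ * (cntD D (P i).1 : ℝ) ≤ (1 - γ) * m := by
        calc γ * (cntD D (P i).1 : ℝ) ≤ γ * c := by nlinarith
        _ ≤ (1 - γ) * m := by
            rw [div_le_iff₀ hg1] at hmge; linarith
      have h0 : (0:ℝ) ≤ (cntD D ((P i).1 ∪ (P i).2) : ℝ) := Nat.cast_nonneg _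
      nlinarith
    have hconc := hent D' hprem
    have hX : ¬ X₀ ⊆ Finset.univ.erase a := fun h => (Finset.mem_erase.mp (h haX)).1 rfl
    have hXY : ¬ X₀ ∪ Y₀ ⊆ Finset.univ.erase a := fun h =>
      hX ((Finset.subset_union_left).trans h)
    rw [hD'] at hconc
    unfold satPI at hconc ⊢
    rw [cnt_add_rep, cnt_add_rep, if_neg hX, if_neg hXY] at hconc
    simpa using hconc
  · -- a ∈ Y₀ \ X₀ : singleton dataset violates entailment from univ
    have haY : a ∈ X₀ ∪ Y₀ := ha
    have hconc := hent {Finset.univ.erase a} (by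
      intro i _
      right
      rw [cnt_single, cnt_single, if_pos (hsub i),
        if_pos ((Finset.subset_union_left).trans (hsub i))]
      norm_num; linarith)
    have hX : X₀ ⊆ Finset.univ.erase a :=
      fun x hx => Finset.mem_erase.mpr ⟨fun h => haX (h ▸ hx), Finset.mem_univ _⟩
    have hXY : ¬ X₀ ∪ Y₀ ⊆ Finset.univ.erase a := fun h =>
      (Finset.mem_erase.mp (h ha)).1 rfl
    unfold satPI at hconc
    rw [cnt_single, cnt_single, if_pos hX, if_neg hXY] at hconc
    rcases hconc with h | h
    · simp at h
    · norm_num at h; linarith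
end

section
/- Let γ be a confidence parameter with 0 < γ < 1, let X₀ → Y₀, X₁ → Y₁, …, X_k → Y_k be partial implications over [n] with k ≥ 1, assume that the entailment X₁ → Y₁, …, X_k → Y_k ⊨_γ X₀ → Y₀ holds properly, and let λ = (λ₁,…,λ_k) be a vector of nonnegative reals such that ∑_{i=1}^{k} λ_i · w_Z(X_i → Y_i) ≤ w_Z(X₀ → Y₀) for every transaction Z ⊆ [n]. Then ∑_{i=1}^{k} λ_i = 1. -/
open Finset

theorem stmt8 {n k : ℕ} (γ : ℝ) (hγ0 : 0 < γ) (hγ1 : γ < 1) (hk : 1 ≤ k)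
    (P : Fin k → Finset (Fin n) × Finset (Fin n)) (X₀ Y₀ : Finset (Fin n))
    (hproper : properFrom γ P Finset.univ X₀ Y₀)
    (lam : Fin k → ℝ) (hlam : ∀ i, 0 ≤ lam i)
    (hineq : ∀ Z : Finset (Fin n),
      ∑ i, lam i * wt γ Z (P i).1 (P i).2 ≤ wt γ Z X₀ Y₀) :
    ∑ i, lam i = 1 := by
  obtain ⟨hent, hmin⟩ := hproper
  have hkne : Nonempty (Fin k) := ⟨⟨0, hk⟩⟩
  have hY : ¬ Y₀ ⊆ X₀ := by
    intro hY
    refine hmin ∅ (Finset.empty_ssubset.2 Finset.univ_nonempty) ?_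
    intro D _
    right
    have hxy : X₀ ∪ Y₀ = X₀ := Finset.union_eq_left.2 hY
    rw [hxy]
    nlinarith [Nat.cast_nonneg (α := ℝ) (cntD D X₀)]
  have h1 : ∑ i, lam i ≤ 1 := by
    have h := hineq Finset.univ
    simp only [wt, Finset.subset_univ, if_pos] at h
    rw [← Finset.sum_mul] at h
    nlinarith
  have h2 : 1 ≤ ∑ i, lam i := by
    have h := hineq X₀
    have hw0 : wt γ X₀ X₀ Y₀ = -γ := by
      unfold wt
      rw [if_neg (by simpa [Finset.union_subset_iff] using hY), if_pos subset_rfl]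
    have hbound : ∀ i ∈ (Finset.univ : Finset (Fin k)),
        -γ * lam i ≤ lam i * wt γ X₀ (P i).1 (P i).2 := by
      intro i _
      have hw : -γ ≤ wt γ X₀ (P i).1 (P i).2 := by
        unfold wt; split_ifs <;> linarith
      nlinarith [hlam i]
    have hs := Finset.sum_le_sum hbound
    rw [hw0] at h
    have hc : ∑ i, -γ * lam i ≤ -γ := le_trans hs h
    rw [← Finset.mul_sum] at hc
    nlinarith
  linarith
end
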